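/- Let Σ be a finite nonempty alphabet and let γ be the 2×2 array pattern γ = [x₁ x₂; x₂ x₁]. Then for all z, z' ∈ {p, r, c, rc} with z ≠ z', L_{Σ,z}(γ) ≠ L_{Σ,z'}(γ). -/

import Mathlib

/-- A nonempty rectangular two-dimensional word (array) over `σ`. -/
structure Arr (σ : Type) : Type where
  rows : ℕ
  cols : ℕ
  rows_pos : 0 < rows
  cols_pos : 0 < cols
  entry : Fin rows → Fin cols → σ

namespace Arr

variable {σ γ : Type}

/-- Column concatenation: place `V` to the right of `U`; `none` if heights differ. -/
def colCat (U V : Arr σ) : Option (Arr σ) :=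
  if h : U.rows = V.rows then
    some { rows := U.rows
           cols := U.cols + V.cols
           rows_pos := U.rows_pos
           cols_pos := by have := U.cols_pos; omega
           entry := fun i j =>
             if hj : (j : ℕ) < U.cols then U.entry i ⟨j, hj⟩
             else V.entry (Fin.cast h i) ⟨(j : ℕ) - U.cols, by have := j.isLt; omega⟩ }
  else none

/-- Row concatenation: place `V` below `U`; `none` if widths differ. -/
def rowCat (U V : Arr σ) : Option (Arr σ) :=
  if h : U.cols = V.cols then
    some { rows := U.rows + V.rows
           cols := U.cols
           rows_pos := by have := U.rows_pos; omega
           cols_pos := U.cols_pos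
           entry := fun i j =>
             if hi : (i : ℕ) < U.rows then U.entry ⟨i, hi⟩ j
             else V.entry ⟨(i : ℕ) - U.rows, by have := i.isLt; omega⟩ (Fin.cast h j) }
  else none

/-- A two-dimensional morphism: compatible with both concatenations,
with "both sides undefined" counting as equal. -/
def IsMorphism (h : Arr σ → Arr γ) : Prop :=
  (∀ V W : Arr σ, Option.map h (colCat V W) = colCat (h V) (h W)) ∧
  (∀ V W : Arr σ, Option.map h (rowCat V W) = rowCat (h V) (h W))

/-- Concatenate a nonempty list of (possibly undefined) arrays with the
given partial concatenation operation; `none` on the empty list. -/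
def catListO (op : Arr σ → Arr σ → Option (Arr σ)) : List (Option (Arr σ)) → Option (Arr σ)
  | [] => none
  | [a] => a
  | a :: b :: rest => a.bind fun x => (catListO op (b :: rest)).bind fun y => op x y

/-- `g_{⦶,⊖}`: substitute and assemble, first column-concatenating each row,
then row-concatenating the rows. -/
def subCR {X : Type} (g : X → Arr σ) (α : Arr X) : Option (Arr σ) :=
  catListO rowCat (List.ofFn fun i : Fin α.rows =>
    catListO colCat (List.ofFn fun j : Fin α.cols => some (g (α.entry i j))))

/-- `g_{⊖,⦶}`: substitute and assemble, first row-concatenating each column,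
then column-concatenating the columns. -/
def subRC {X : Type} (g : X → Arr σ) (α : Arr X) : Option (Arr σ) :=
  catListO colCat (List.ofFn fun j : Fin α.cols =>
    catListO rowCat (List.ofFn fun i : Fin α.rows => some (g (α.entry i j))))

/-- A substitution is uniform if all images have the same dimensions. -/
def Uniform {X : Type} (g : X → Arr σ) : Prop :=
  ∃ m n : ℕ, ∀ x : X, (g x).rows = m ∧ (g x).cols = n

end Arr

open Arr

/-- The five modes of array pattern languages. -/
inductive Mode | h | p | r | c | rc
deriving DecidableEq

/-- The array pattern language of an array pattern (an array over the
variables `ℕ`) in each mode. -/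
def langOf (σ : Type) : Mode → Arr ℕ → Set (Arr σ)
  | Mode.h, α => {W | ∃ g : Arr ℕ → Arr σ, IsMorphism g ∧ g α = W}
  | Mode.p, α => {W | ∃ s : ℕ → Arr σ, subCR s α = some W ∧ subRC s α = some W}
  | Mode.r, α => {W | ∃ s : ℕ → Arr σ, subCR s α = some W}
  | Mode.c, α => {W | ∃ s : ℕ → Arr σ, subRC s α = some W}
  | Mode.rc, α =>
      {W | ∃ s : ℕ → Arr σ, subCR s α = some W} ∪ {W | ∃ s : ℕ → Arr σ, subRC s α = some W}

/-- The 2×2 array pattern `[x₁ x₂; x₂ x₁]`. -/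
def gamma5 : Arr ℕ :=
  ⟨2, 2, by norm_num, by norm_num, fun i j => if (i : ℕ) = (j : ℕ) then 0 else 1⟩


namespace StmtFive

variable {σ : Type}

/-- Extensionality for arrays. -/
lemma Arr.ext' : ∀ {U V : Arr σ} (hr : U.rows = V.rows) (hc : U.cols = V.cols),
    (∀ i j, U.entry i j = V.entry (Fin.cast hr i) (Fin.cast hc j)) → U = V := by
  rintro ⟨r1, c1, hr1, hc1, e1⟩ ⟨r2, c2, hr2, hc2, e2⟩ hr hc he
  dsimp at hr hc
  subst hr; subst hc
  simp only [Arr.mk.injEq, heq_eq_eq, true_and]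
  funext i j
  simpa using he i j

/-- Constant array. -/
def K (a : σ) (m n : ℕ) (hm : 0 < m) (hn : 0 < n) : Arr σ :=
  ⟨m, n, hm, hn, fun _ _ => a⟩

lemma colCat_K (a : σ) (m n1 n2 : ℕ) (hm : 0 < m) (h1 : 0 < n1) (h2 : 0 < n2) :
    colCat (K a m n1 hm h1) (K a m n2 hm h2) = some (K a m (n1 + n2) hm (by omega)) := by
  unfold colCat
  rw [dif_pos (show (K a m n1 hm h1).rows = (K a m n2 hm h2).rows from rfl)]
  simp only [K, Option.some.injEq, Arr.mk.injEq, heq_eq_eq, true_and]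
  congr 1
  funext i j
  exact dite_eq_ite.trans (ite_self a)

lemma rowCat_K (a : σ) (m1 m2 n : ℕ) (h1 : 0 < m1) (h2 : 0 < m2) (hn : 0 < n) :
    rowCat (K a m1 n h1 hn) (K a m2 n h2 hn) = some (K a (m1 + m2) n (by omega) hn) := by
  unfold rowCat
  rw [dif_pos (show (K a m1 n h1 hn).cols = (K a m2 n h2 hn).cols from rfl)]
  simp only [K, Option.some.injEq, Arr.mk.injEq, heq_eq_eq, true_and]
  congr 1
  funext i j
  exact dite_eq_ite.trans (ite_self a)

lemma colCat_eq_some {U V W : Arr σ} (h : colCat U V = some W) :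
    U.rows = V.rows ∧ W.rows = U.rows ∧ W.cols = U.cols + V.cols := by
  unfold colCat at h
  split_ifs at h with h1
  · injection h with h; subst h; exact ⟨h1, rfl, rfl⟩

lemma rowCat_eq_some {U V W : Arr σ} (h : rowCat U V = some W) :
    U.cols = V.cols ∧ W.cols = U.cols ∧ W.rows = U.rows + V.rows := by
  unfold rowCat at h
  split_ifs at h with h1
  · injection h with h; subst h; exact ⟨h1, rfl, rfl⟩

lemma subCR_gamma5 (s : ℕ → Arr σ) :
    subCR s gamma5 =
      (colCat (s 0) (s 1)).bind fun x => (colCat (s 1) (s 0)).bind fun y => rowCat x y := rfl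

lemma subRC_gamma5 (s : ℕ → Arr σ) :
    subRC s gamma5 =
      (rowCat (s 0) (s 1)).bind fun x => (rowCat (s 1) (s 0)).bind fun y => colCat x y := rfl

lemma rows_even_of_subCR {s : ℕ → Arr σ} {W : Arr σ} (h : subCR s gamma5 = some W) :
    W.rows % 2 = 0 := by
  rw [subCR_gamma5] at h
  obtain ⟨x, hx, h⟩ := Option.bind_eq_some_iff.mp h
  obtain ⟨y, hy, h⟩ := Option.bind_eq_some_iff.mp h
  obtain ⟨hx1, hx2, hx3⟩ := colCat_eq_some hx
  obtain ⟨hy1, hy2, hy3⟩ := colCat_eq_some hy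
  obtain ⟨h1, h2, h3⟩ := rowCat_eq_some h
  omega

lemma cols_even_of_subRC {s : ℕ → Arr σ} {W : Arr σ} (h : subRC s gamma5 = some W) :
    W.cols % 2 = 0 := by
  rw [subRC_gamma5] at h
  obtain ⟨x, hx, h⟩ := Option.bind_eq_some_iff.mp h
  obtain ⟨y, hy, h⟩ := Option.bind_eq_some_iff.mp h
  obtain ⟨hx1, hx2, hx3⟩ := rowCat_eq_some hx
  obtain ⟨hy1, hy2, hy3⟩ := rowCat_eq_some hy
  obtain ⟨h1, h2, h3⟩ := colCat_eq_some h
  omega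

/-- The witness substitution `x₁ ↦ 1×1, x₂ ↦ 1×2` (all entries `a`). -/
def sR (a : σ) : ℕ → Arr σ := fun x =>
  if x = 0 then K a 1 1 one_pos one_pos else K a 1 2 one_pos two_pos

lemma subCR_sR (a : σ) : subCR (sR a) gamma5 = some (K a 2 3 two_pos three_pos) := by
  rw [subCR_gamma5,
    show sR a 0 = K a 1 1 one_pos one_pos from rfl,
    show sR a 1 = K a 1 2 one_pos two_pos from rfl,
    colCat_K, colCat_K]
  simp only [Option.bind_some]
  exact rowCat_K a 1 1 3 one_pos one_pos three_pos

/-- The witness substitution `x₁ ↦ 1×1, x₂ ↦ 2×1` (all entries `a`). -/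
def sC (a : σ) : ℕ → Arr σ := fun x =>
  if x = 0 then K a 1 1 one_pos one_pos else K a 2 1 two_pos one_pos

lemma subRC_sC (a : σ) : subRC (sC a) gamma5 = some (K a 3 2 three_pos two_pos) := by
  rw [subRC_gamma5,
    show sC a 0 = K a 1 1 one_pos one_pos from rfl,
    show sC a 1 = K a 2 1 two_pos one_pos from rfl,
    rowCat_K, rowCat_K]
  simp only [Option.bind_some]
  exact colCat_K a 3 1 1 three_pos one_pos one_pos

end StmtFive

open StmtFive in
/-- for distinct modes `z, z' ∈ {p, r, c, rc}`, the `z` and `z'`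
pattern languages of `γ = [x₁ x₂; x₂ x₁]` differ. -/
theorem stmt5 {σ : Type} [Fintype σ] [Nonempty σ] (z z' : Mode)
    (hz : z ≠ Mode.h) (hz' : z' ≠ Mode.h) (hne : z ≠ z') :
    langOf σ z gamma5 ≠ langOf σ z' gamma5 := by
  obtain ⟨a⟩ := ‹Nonempty σ›
  set Wr : Arr σ := K a 2 3 two_pos three_pos with hWrdef
  set Wc : Arr σ := K a 3 2 three_pos two_pos with hWcdef
  have setne : ∀ {s t : Set (Arr σ)} {x : Arr σ}, x ∈ s → x ∉ t → s ≠ t :=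
    fun h1 h2 h => h2 (h ▸ h1)
  have hWr_r : Wr ∈ langOf σ Mode.r gamma5 := ⟨sR a, subCR_sR a⟩
  have hWr_rc : Wr ∈ langOf σ Mode.rc gamma5 := Or.inl ⟨sR a, subCR_sR a⟩
  have hWr_nc : Wr ∉ langOf σ Mode.c gamma5 := by
    rintro ⟨s, hs⟩
    have := cols_even_of_subRC hs
    simp [hWrdef, K] at this
  have hWr_np : Wr ∉ langOf σ Mode.p gamma5 := by
    rintro ⟨s, -, hs⟩
    have := cols_even_of_subRC hs
    simp [hWrdef, K] at this
  have hWc_c : Wc ∈ langOf σ Mode.c gamma5 := ⟨sC a, subRC_sC a⟩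
  have hWc_rc : Wc ∈ langOf σ Mode.rc gamma5 := Or.inr ⟨sC a, subRC_sC a⟩
  have hWc_nr : Wc ∉ langOf σ Mode.r gamma5 := by
    rintro ⟨s, hs⟩
    have := rows_even_of_subCR hs
    simp [hWcdef, K] at this
  have hWc_np : Wc ∉ langOf σ Mode.p gamma5 := by
    rintro ⟨s, hs, -⟩
    have := rows_even_of_subCR hs
    simp [hWcdef, K] at this
  cases z <;> cases z' <;>
    first
      | exact absurd rfl hz
      | exact absurd rfl hz'
      | exact absurd rfl hne
      | exact (setne hWr_r hWr_np).symm
      | skip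
  · exact setne hWc_c hWc_np |>.symm
  · exact (setne hWr_rc hWr_np).symm
  · exact setne hWr_r hWr_np
  · exact setne hWr_r hWr_nc
  · exact (setne hWc_rc hWc_nr).symm
  · exact setne hWc_c hWc_np
  · exact setne hWc_c hWc_nr
  · exact (setne hWr_rc hWr_nc).symm
  · exact setne hWr_rc hWr_np
  · exact setne hWc_rc hWc_nr
  · exact setne hWr_rc hWr_nc
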